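/- arXiv:1712.02103 — 6 statements merged into one kernel-verified Lean document; each statement's English description precedes it below -/
import Mathlib

section
/- Let S be a finite set of jobs and S' ⊆ S. Let π and π' be two permutations (lists) of S', and let σ be a permutation of S \ S'. If C_2(π) ≤ C_2(π') and C_3(π) ≤ C_3(π'), then C_2(π ++ σ) ≤ C_2(π' ++ σ) and C_3(π ++ σ) ≤ C_3(π' ++ σ). -/
/-- Machine completion times `(C₁, C₂, C₃)` of a job sequence in a
three-machine flowshop with processing times `p i j`. -/
def flowComp (p : ℕ → Fin 3 → ℕ) (π : List ℕ) : ℕ × ℕ × ℕ :=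
  π.foldl (fun c i =>
    let c1 := c.1 + p i 0
    let c2 := max c.2.1 c1 + p i 1
    let c3 := max c.2.2 c2 + p i 2
    (c1, c2, c3)) (0, 0, 0)

/-- Completion time on machine 2. -/
def C2 (p : ℕ → Fin 3 → ℕ) (π : List ℕ) : ℕ := (flowComp p π).2.1

/-- Completion time on machine 3. -/
def C3 (p : ℕ → Fin 3 → ℕ) (π : List ℕ) : ℕ := (flowComp p π).2.2

/-- `π` is a permutation of the finite jobset `S`: it lists each element
of `S` exactly once. -/
def IsPermOf (π : List ℕ) (S : Finset ℕ) : Prop :=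
  π.Nodup ∧ ∀ x, x ∈ π ↔ x ∈ S

private lemma foldl_fst (p : ℕ → Fin 3 → ℕ) (σ : List ℕ) (c : ℕ × ℕ × ℕ) :
    (σ.foldl (fun c i =>
      let c1 := c.1 + p i 0
      let c2 := max c.2.1 c1 + p i 1
      let c3 := max c.2.2 c2 + p i 2
      (c1, c2, c3)) c).1 = c.1 + (σ.map (fun i => p i 0)).sum := by
  induction σ generalizing c with
  | nil => simp
  | cons a t ih => simp [ih, Nat.add_assoc]

private lemma foldl_mono (p : ℕ → Fin 3 → ℕ) (σ : List ℕ) (a b : ℕ × ℕ × ℕ)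
    (h1 : a.1 = b.1) (h2 : a.2.1 ≤ b.2.1) (h3 : a.2.2 ≤ b.2.2) :
    let f := fun (c : ℕ × ℕ × ℕ) i =>
      let c1 := c.1 + p i 0
      let c2 := max c.2.1 c1 + p i 1
      let c3 := max c.2.2 c2 + p i 2
      (c1, c2, c3)
    (σ.foldl f a).1 = (σ.foldl f b).1 ∧
    (σ.foldl f a).2.1 ≤ (σ.foldl f b).2.1 ∧
    (σ.foldl f a).2.2 ≤ (σ.foldl f b).2.2 := by
  intro f
  induction σ generalizing a b with
  | nil => exact ⟨h1, h2, h3⟩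
  | cons x t ih =>
    apply ih
    · simp [f, h1]
    · simp only [f]
      exact Nat.add_le_add_right (max_le_max h2 (by rw [h1])) _
    · simp only [f]
      exact Nat.add_le_add_right (max_le_max h3
        (Nat.add_le_add_right (max_le_max h2 (by rw [h1])) _)) _

theorem stmt_0 (p : ℕ → Fin 3 → ℕ) (S S' : Finset ℕ) (hS' : S' ⊆ S)
    (π π' σ : List ℕ) (hπ : IsPermOf π S') (hπ' : IsPermOf π' S')
    (hσ : IsPermOf σ (S \ S'))
    (h2 : C2 p π ≤ C2 p π') (h3 : C3 p π ≤ C3 p π') :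
    C2 p (π ++ σ) ≤ C2 p (π' ++ σ) ∧ C3 p (π ++ σ) ≤ C3 p (π' ++ σ) := by
  have hperm : π.Perm π' := by
    rw [List.perm_ext_iff_of_nodup hπ.1 hπ'.1]
    intro a
    rw [hπ.2, hπ'.2]
  have h1 : (flowComp p π).1 = (flowComp p π').1 := by
    show (List.foldl _ (0,0,0) π).1 = (List.foldl _ (0,0,0) π').1
    rw [foldl_fst, foldl_fst]
    exact congrArg _ ((hperm.map _).sum_eq)
  have key := foldl_mono p σ (flowComp p π) (flowComp p π') h1 h2 h3
  have e : ∀ τ, flowComp p (τ ++ σ) = σ.foldl _ (flowComp p τ) := fun τ =>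
    List.foldl_append
  constructor
  · show (flowComp p (π ++ σ)).2.1 ≤ (flowComp p (π' ++ σ)).2.1
    rw [e, e]; exact key.2.1
  · show (flowComp p (π ++ σ)).2.2 ≤ (flowComp p (π' ++ σ)).2.2
    rw [e, e]; exact key.2.2
end

section
/- Let S be a finite set of jobs and S' ⊆ S. Let π and π' be two permutations of S', and let σ be a permutation of S \ S'. Suppose each job i has a nondecreasing cost function f_i and define f_max(π) as the maximum over all jobs i occurring in π of f_i(C_i(π)) (with f_max([]) = 0). If C_2(π) ≤ C_2(π'), C_3(π) ≤ C_3(π') and f_max(π) ≤ f_max(π'), then C_2(π ++ σ) ≤ C_2(π' ++ σ), C_3(π ++ σ) ≤ C_3(π' ++ σ) and f_max(π ++ σ) ≤ f_max(π' ++ σ). -/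
/-- Completion time of job `i` in the sequence `π`: `C₃` of the prefix of `π`
ending at (the first occurrence of) `i`. -/
def jobC (p : ℕ → Fin 3 → ℕ) (π : List ℕ) (i : ℕ) : ℕ :=
  C3 p (π.takeWhile (· != i) ++ [i])

/-- `f_max(π)`: the maximum over jobs `i` occurring in `π` of `f i (C_i(π))`,
with value `0` on the empty list. -/
noncomputable def fmax (p : ℕ → Fin 3 → ℕ) (f : ℕ → ℕ → ℝ) (π : List ℕ) : ℝ :=
  (π.map (fun i => f i (jobC p π i))).foldr max 0

def fstep (p : ℕ → Fin 3 → ℕ) (c : ℕ × ℕ × ℕ) (i : ℕ) : ℕ × ℕ × ℕ :=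
  let c1 := c.1 + p i 0
  let c2 := max c.2.1 c1 + p i 1
  let c3 := max c.2.2 c2 + p i 2
  (c1, c2, c3)

lemma flowComp_eq (p : ℕ → Fin 3 → ℕ) (l : List ℕ) :
    flowComp p l = List.foldl (fstep p) (0,0,0) l := rfl

lemma flowComp_append (p : ℕ → Fin 3 → ℕ) (l1 l2 : List ℕ) :
    flowComp p (l1 ++ l2) = List.foldl (fstep p) (flowComp p l1) l2 := by
  rw [flowComp_eq, List.foldl_append, flowComp_eq]

lemma foldl_mono_s1 (p : ℕ → Fin 3 → ℕ) (l : List ℕ) :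
    ∀ c d : ℕ×ℕ×ℕ, c.1 ≤ d.1 → c.2.1 ≤ d.2.1 → c.2.2 ≤ d.2.2 →
    (List.foldl (fstep p) c l).1 ≤ (List.foldl (fstep p) d l).1 ∧
    (List.foldl (fstep p) c l).2.1 ≤ (List.foldl (fstep p) d l).2.1 ∧
    (List.foldl (fstep p) c l).2.2 ≤ (List.foldl (fstep p) d l).2.2 := by
  induction l with
  | nil => exact fun c d h1 h2 h3 => ⟨h1, h2, h3⟩
  | cons a l ih =>
    intro c d h1 h2 h3
    simp only [List.foldl_cons]
    exact ih _ _ (by simp [fstep]; omega) (by simp [fstep]; omega) (by simp [fstep]; omega)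

lemma foldl_fst_s1 (p : ℕ → Fin 3 → ℕ) (l : List ℕ) :
    ∀ c : ℕ×ℕ×ℕ, (List.foldl (fstep p) c l).1 = c.1 + (l.map (fun i => p i 0)).sum := by
  induction l with
  | nil => simp
  | cons a l ih => intro c; simp [ih, fstep]; omega

lemma foldr_max_nonneg (l : List ℝ) : 0 ≤ l.foldr max 0 := by
  induction l with
  | nil => simp
  | cons a l ih => exact le_trans ih (by simp)

lemma le_foldr_max {a : ℝ} {l : List ℝ} (h : a ∈ l) : a ≤ l.foldr max 0 := by
  induction l with
  | nil => simp at h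
  | cons b l ih =>
    rcases List.mem_cons.mp h with rfl | h
    · simp
    · exact le_trans (ih h) (by simp)

lemma foldr_max_le {M : ℝ} {l : List ℝ} (h0 : 0 ≤ M) (h : ∀ a ∈ l, a ≤ M) :
    l.foldr max 0 ≤ M := by
  induction l with
  | nil => simpa
  | cons b l ih =>
    simp only [List.foldr_cons, max_le_iff]
    exact ⟨h b (by simp), ih fun a ha => h a (by simp [ha])⟩

lemma takeWhile_append_of_mem {q : ℕ → Bool} {l1 : List ℕ} (l2 : List ℕ)
    (h : ∃ x ∈ l1, q x = false) :
    (l1 ++ l2).takeWhile q = l1.takeWhile q := by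
  induction l1 with
  | nil => simp at h
  | cons a l ih =>
    rcases h with ⟨x, hx, hqx⟩
    rcases List.mem_cons.mp hx with rfl | hx
    · simp [List.takeWhile, hqx]
    · by_cases hqa : q a
      · simp [List.takeWhile, hqa, ih ⟨x, hx, hqx⟩]
      · simp [List.takeWhile, hqa]

lemma takeWhile_append_of_all {q : ℕ → Bool} {l1 : List ℕ} (l2 : List ℕ)
    (h : ∀ x ∈ l1, q x = true) :
    (l1 ++ l2).takeWhile q = l1 ++ l2.takeWhile q := by
  induction l1 with
  | nil => simp
  | cons a l ih =>
    have := h a (by simp)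
    simp [List.takeWhile, this, ih fun x hx => h x (by simp [hx])]

theorem stmt_1 (p : ℕ → Fin 3 → ℕ) (f : ℕ → ℕ → ℝ)
    (hfmono : ∀ i, Monotone (f i)) (hfnn : ∀ i t, 0 ≤ f i t)
    (S S' : Finset ℕ) (hS' : S' ⊆ S)
    (π π' σ : List ℕ) (hπ : IsPermOf π S') (hπ' : IsPermOf π' S')
    (hσ : IsPermOf σ (S \ S'))
    (h2 : C2 p π ≤ C2 p π') (h3 : C3 p π ≤ C3 p π')
    (hf : fmax p f π ≤ fmax p f π') :
    C2 p (π ++ σ) ≤ C2 p (π' ++ σ) ∧ C3 p (π ++ σ) ≤ C3 p (π' ++ σ) ∧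
      fmax p f (π ++ σ) ≤ fmax p f (π' ++ σ) := by
  -- π and π' are permutations of each other
  have hperm : π.Perm π' := by
    rw [List.perm_ext_iff_of_nodup hπ.1 hπ'.1]
    intro a; rw [hπ.2, hπ'.2]
  have h1eq : (flowComp p π).1 = (flowComp p π').1 := by
    rw [flowComp_eq, flowComp_eq, foldl_fst_s1, foldl_fst_s1, (hperm.map _).sum_eq]
  -- disjointness facts
  have hdisjπ : ∀ i ∈ σ, i ∉ π := by
    intro i hi hiπ
    have := (hσ.2 i).mp hi
    have := (hπ.2 i).mp hiπ
    simp [Finset.mem_sdiff] at *; tauto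
  have hdisjπ' : ∀ i ∈ σ, i ∉ π' := by
    intro i hi hiπ
    have := (hσ.2 i).mp hi
    have := (hπ'.2 i).mp hiπ
    simp [Finset.mem_sdiff] at *; tauto
  -- monotone continuation
  have hmono : ∀ τ : List ℕ,
      (flowComp p (π ++ τ)).1 ≤ (flowComp p (π' ++ τ)).1 ∧
      (flowComp p (π ++ τ)).2.1 ≤ (flowComp p (π' ++ τ)).2.1 ∧
      (flowComp p (π ++ τ)).2.2 ≤ (flowComp p (π' ++ τ)).2.2 := by
    intro τ
    rw [flowComp_append, flowComp_append]
    exact foldl_mono_s1 p τ _ _ (le_of_eq h1eq) h2 h3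
  -- jobC equalities
  have hjobπ : ∀ i ∈ π, jobC p (π ++ σ) i = jobC p π i := by
    intro i hi
    unfold jobC
    rw [takeWhile_append_of_mem σ ⟨i, hi, by simp⟩]
  have hjobπ' : ∀ i ∈ π', jobC p (π' ++ σ) i = jobC p π' i := by
    intro i hi
    unfold jobC
    rw [takeWhile_append_of_mem σ ⟨i, hi, by simp⟩]
  have hjobσπ : ∀ i ∈ σ, jobC p (π ++ σ) i =
      C3 p (π ++ (σ.takeWhile (· != i) ++ [i])) := by
    intro i hi
    unfold jobC
    rw [takeWhile_append_of_all σ (fun x hx => by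
      simp only [bne_iff_ne, ne_eq, decide_eq_true_eq]
      exact fun h => hdisjπ i hi (h ▸ hx)), List.append_assoc]
  have hjobσπ' : ∀ i ∈ σ, jobC p (π' ++ σ) i =
      C3 p (π' ++ (σ.takeWhile (· != i) ++ [i])) := by
    intro i hi
    unfold jobC
    rw [takeWhile_append_of_all σ (fun x hx => by
      simp only [bne_iff_ne, ne_eq, decide_eq_true_eq]
      exact fun h => hdisjπ' i hi (h ▸ hx)), List.append_assoc]
  refine ⟨(hmono σ).2.1, (hmono σ).2.2, ?_⟩
  -- fmax part
  have hnn' : (0:ℝ) ≤ fmax p f (π' ++ σ) := foldr_max_nonneg _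
  have hmem' : ∀ i ∈ π' ++ σ, f i (jobC p (π' ++ σ) i) ≤ fmax p f (π' ++ σ) := by
    intro i hi
    exact le_foldr_max (List.mem_map_of_mem hi)
  have hπ'le : fmax p f π' ≤ fmax p f (π' ++ σ) := by
    apply foldr_max_le hnn'
    intro a ha
    rcases List.mem_map.mp ha with ⟨i, hi, rfl⟩
    rw [← hjobπ' i hi]
    exact hmem' i (by simp [hi])
  apply foldr_max_le hnn'
  intro a ha
  rcases List.mem_map.mp ha with ⟨i, hi, rfl⟩
  rcases List.mem_append.mp hi with hiπ | hiσ
  · rw [hjobπ i hiπ]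
    calc f i (jobC p π i) ≤ fmax p f π := le_foldr_max (List.mem_map_of_mem hiπ)
      _ ≤ fmax p f π' := hf
      _ ≤ fmax p f (π' ++ σ) := hπ'le
  · rw [hjobσπ i hiσ]
    calc f i (C3 p (π ++ (σ.takeWhile (· != i) ++ [i])))
        ≤ f i (C3 p (π' ++ (σ.takeWhile (· != i) ++ [i]))) :=
          hfmono i (hmono _).2.2
      _ = f i (jobC p (π' ++ σ) i) := by rw [hjobσπ' i hiσ]
      _ ≤ fmax p f (π' ++ σ) := hmem' i (by simp [hiσ])
end

section
/- For any finite jobset S' of cardinality t ≥ 1, the set of values {C_2(π) : π a permutation of S'} has cardinality at most t · 2^{t−1}. -/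
lemma flowComp_append_s3 (p : ℕ → Fin 3 → ℕ) (π : List ℕ) (i : ℕ) :
    flowComp p (π ++ [i]) =
      ((flowComp p π).1 + p i 0,
       max (flowComp p π).2.1 ((flowComp p π).1 + p i 0) + p i 1,
       max (flowComp p π).2.2 (max (flowComp p π).2.1 ((flowComp p π).1 + p i 0) + p i 1) + p i 2) := by
  simp [flowComp, List.foldl_append]

lemma flowComp_fst (p : ℕ → Fin 3 → ℕ) (π : List ℕ) :
    (flowComp p π).1 = (π.map (fun i => p i 0)).sum := by
  induction π using List.reverseRecOn with
  | nil => simp [flowComp]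
  | append_singleton π i ih => simp [flowComp_append_s3, ih]

lemma C2_split (p : ℕ → Fin 3 → ℕ) :
    ∀ π : List ℕ, π ≠ [] → ∃ a j b, π = a ++ j :: b ∧
      C2 p π = ((a ++ [j]).map (fun i => p i 0)).sum
        + (p j 1 + (b.map (fun i => p i 1)).sum) := by
  intro π
  induction π using List.reverseRecOn with
  | nil => intro h; exact absurd rfl h
  | append_singleton π i ih =>
    intro _
    rcases eq_or_ne π [] with h | h
    · subst h
      exact ⟨[], i, [], rfl, by simp [C2, flowComp]⟩
    · rcases le_or_gt ((flowComp p π).1 + p i 0) ((flowComp p π).2.1) with hle | hlt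
      · obtain ⟨a, j, b, hsplit, hval⟩ := ih h
        refine ⟨a, j, b ++ [i], by rw [hsplit]; simp, ?_⟩
        have : C2 p (π ++ [i]) = C2 p π + p i 1 := by
          simp [C2, flowComp_append_s3, max_eq_left hle]
        rw [this, hval]
        simp [add_assoc]
      · refine ⟨π, i, [], rfl, ?_⟩
        have : C2 p (π ++ [i]) = (flowComp p π).1 + p i 0 + p i 1 := by
          simp [C2, flowComp_append_s3, max_eq_right hlt.le]
        rw [this, flowComp_fst]
        simp [add_assoc]

theorem stmt_3 (p : ℕ → Fin 3 → ℕ) (S' : Finset ℕ) (t : ℕ) (ht : 1 ≤ t)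
    (hcard : S'.card = t) :
    {v : ℕ | ∃ π : List ℕ, IsPermOf π S' ∧ C2 p π = v}.ncard ≤ t * 2 ^ (t - 1) := by
  classical
  set g : (Σ _ : ℕ, Finset ℕ) → ℕ := fun q =>
    (∑ x ∈ insert q.1 q.2, p x 0) + (p q.1 1 + ∑ x ∈ S' \ insert q.1 q.2, p x 1) with hg
  set T : Finset (Σ _ : ℕ, Finset ℕ) := S'.sigma (fun j => (S'.erase j).powerset) with hT
  have hsub : {v : ℕ | ∃ π : List ℕ, IsPermOf π S' ∧ C2 p π = v} ⊆ ↑(T.image g) := by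
    rintro v ⟨π, ⟨hnd, hmem⟩, rfl⟩
    have hπne : π ≠ [] := by
      have h0 : 0 < S'.card := by omega
      obtain ⟨x, hx⟩ := Finset.card_pos.mp h0
      intro hnil
      exact absurd ((hmem x).mpr hx) (by simp [hnil])
    obtain ⟨a, j, b, hsplit, hval⟩ := C2_split p π hπne
    subst hsplit
    have hndA : (a ++ [j]).Nodup := by
      have := hnd
      simp only [List.nodup_append', List.nodup_cons] at this ⊢
      exact ⟨this.1, by simp, by
        intro x hx hx'
        simp at hx'
        subst hx'
        exact (this.2.2 hx) (by simp)⟩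
    have hjb : j ∉ b ∧ b.Nodup := by
      have := (List.nodup_append.mp hnd).2.1
      simpa using this
    have hdisj : Disjoint ((a ++ [j]).toFinset) b.toFinset := by
      rw [List.disjoint_toFinset_iff_disjoint]
      intro x hx hx'
      simp only [List.mem_append, List.mem_singleton] at hx
      rcases hx with hx | hx
      · exact ((List.nodup_append'.mp hnd).2.2 hx) (by simp [hx'])
      · exact hjb.1 (hx ▸ hx')
    have hunion : ((a ++ [j]).toFinset) ∪ b.toFinset = S' := by
      ext x
      simp only [Finset.mem_union, List.mem_toFinset, ← hmem x]
      simp [or_assoc]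
    refine Finset.mem_coe.mpr (Finset.mem_image.mpr ⟨⟨j, a.toFinset⟩, ?_, ?_⟩)
    · rw [hT]
      refine Finset.mem_sigma.mpr ⟨(hmem j).mp (by simp), ?_⟩
      refine Finset.mem_powerset.mpr (fun x hx => ?_)
      simp only [List.mem_toFinset] at hx
      refine Finset.mem_erase.mpr ⟨?_, (hmem x).mp (by simp [hx])⟩
      intro hxj
      exact ((List.nodup_append'.mp hnd).2.2 hx) (by simp [hxj])
    · have hAeq : insert j a.toFinset = (a ++ [j]).toFinset := by
        ext x; simp [or_comm]
      rw [hg]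
      simp only [hAeq]
      have h1 : ∑ x ∈ (a ++ [j]).toFinset, p x 0
          = ((a ++ [j]).map (fun i => p i 0)).sum := List.sum_toFinset _ hndA
      have h2 : S' \ (a ++ [j]).toFinset = b.toFinset := by
        rw [← hunion, Finset.union_sdiff_cancel_left hdisj]
      have h3 : ∑ x ∈ b.toFinset, p x 1
          = (b.map (fun i => p i 1)).sum := List.sum_toFinset _ hjb.2
      rw [h1, h2, h3, hval]
  have hfin : (↑(T.image g) : Set ℕ).Finite := (T.image g).finite_toSet
  calc {v : ℕ | ∃ π : List ℕ, IsPermOf π S' ∧ C2 p π = v}.ncard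
      ≤ (↑(T.image g) : Set ℕ).ncard := Set.ncard_le_ncard hsub hfin
    _ = (T.image g).card := Set.ncard_coe_finset _
    _ ≤ T.card := Finset.card_image_le
    _ = t * 2 ^ (t - 1) := by
        rw [hT, Finset.card_sigma]
        have : ∀ j ∈ S', ((S'.erase j).powerset).card = 2 ^ (t - 1) := by
          intro j hj
          rw [Finset.card_powerset, Finset.card_erase_of_mem hj, hcard]
        rw [Finset.sum_congr rfl this]
        simp [hcard, mul_comm]
end

section
/- For any finite jobset S of cardinality t ≥ 1 on a single machine with release dates, the set of values {C(π) : π a permutation of S} has cardinality at most t · 2^{t−1}. -/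
/-- Completion time of a job sequence on a single machine with release
dates `r` and processing times `p`, started at time 0:
`C([]) = 0` and `C(π ++ [i]) = max(C(π), r i) + p i`. -/
def relC (r p : ℕ → ℕ) (π : List ℕ) : ℕ :=
  π.foldl (fun c i => max c (r i) + p i) 0

lemma relC_key (r p : ℕ → ℕ) : ∀ π : List ℕ, π.Nodup → π ≠ [] →
    ∃ i T, i ∈ T ∧ T ⊆ π.toFinset ∧ relC r p π = r i + ∑ j ∈ T, p j := by
  intro π
  induction π using List.reverseRecOn with
  | nil => simp
  | append_singleton π k ih =>
    intro hnd _
    have hnd' : π.Nodup ∧ k ∉ π := by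
      constructor
      · exact (List.nodup_append.mp hnd).1
      · intro hk
        exact (List.nodup_append.mp hnd).2.2 k hk k (by simp) rfl
    have hrel : relC r p (π ++ [k]) = max (relC r p π) (r k) + p k := by
      simp [relC, List.foldl_append]
    rcases eq_or_ne π [] with h | h
    · subst h
      exact ⟨k, {k}, by simp, by simp, by simp [relC]⟩
    · obtain ⟨i, T, hiT, hTs, hval⟩ := ih hnd'.1 h
      rcases le_total (r k) (relC r p π) with hle | hle
      · have hkT : k ∉ T := fun hk => hnd'.2 (List.mem_toFinset.mp (hTs hk))
        refine ⟨i, insert k T, Finset.mem_insert_of_mem hiT, ?_, ?_⟩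
        · intro x hx
          rcases Finset.mem_insert.mp hx with hx | hx
          · simp [hx]
          · simp [List.mem_toFinset.mp (hTs hx)]
        · rw [hrel, max_eq_left hle, hval, Finset.sum_insert hkT]
          ring
      · refine ⟨k, {k}, by simp, by simp, ?_⟩
        rw [hrel, max_eq_right hle]
        simp

theorem stmt_7 (r p : ℕ → ℕ) (S : Finset ℕ) (t : ℕ) (ht : 1 ≤ t)
    (hcard : S.card = t) :
    {v : ℕ | ∃ π : List ℕ, IsPermOf π S ∧ relC r p π = v}.ncard ≤ t * 2 ^ (t - 1) := by
  set A : Finset ((_ : ℕ) × Finset ℕ) := S.sigma (fun i => (S.erase i).powerset) with hA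
  set f : ((_ : ℕ) × Finset ℕ) → ℕ := fun q => r q.1 + p q.1 + ∑ j ∈ q.2, p j with hf
  have hsub : {v : ℕ | ∃ π : List ℕ, IsPermOf π S ∧ relC r p π = v} ⊆ ↑(A.image f) := by
    rintro v ⟨π, ⟨hnd, hmem⟩, hv⟩
    have hπne : π ≠ [] := by
      intro h
      subst h
      have : S = ∅ := by
        ext x; simpa using (hmem x).symm
      rw [this] at hcard
      simp at hcard
      omega
    obtain ⟨i, T, hiT, hTs, hval⟩ := relC_key r p π hnd hπne
    have hTS : T ⊆ S := fun x hx => (hmem x).mp (List.mem_toFinset.mp (hTs hx))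
    have hiS : i ∈ S := hTS hiT
    simp only [Finset.coe_image, Set.mem_image, Finset.mem_coe]
    refine ⟨⟨i, T.erase i⟩, ?_, ?_⟩
    · rw [hA]
      rw [Finset.mem_sigma]
      exact ⟨hiS, Finset.mem_powerset.mpr (Finset.erase_subset_erase i hTS)⟩
    · rw [hf]
      simp only
      rw [← hv, hval, add_assoc, Finset.add_sum_erase _ _ hiT]
  calc {v : ℕ | ∃ π : List ℕ, IsPermOf π S ∧ relC r p π = v}.ncard
      ≤ (↑(A.image f) : Set ℕ).ncard := Set.ncard_le_ncard hsub (A.image f).finite_toSet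
    _ = (A.image f).card := Set.ncard_coe_finset _
    _ ≤ A.card := Finset.card_image_le
    _ = ∑ i ∈ S, ((S.erase i).powerset).card := Finset.card_sigma _ _
    _ = t * 2 ^ (t - 1) := by
        rw [Finset.sum_congr rfl (fun i hi => ?_), Finset.sum_const, hcard, smul_eq_mul]
        rw [Finset.card_powerset, Finset.card_erase_of_mem hi, hcard]
end

section
/- Let T : ℕ → ℝ and p : ℕ → ℝ with T(n) ≥ 0 and p(n) ≥ 0 for all n, and p nondecreasing. If T(n) ≤ 2·Σ_{i=1}^{n−1} T(i) + p(n) for all n ≥ 2, then T(n) ≤ 3^{n−1} · (T(1) + p(n)) for all n ≥ 1. -/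
theorem stmt_9 (T p : ℕ → ℝ) (hT : ∀ n, 0 ≤ T n) (hp : ∀ n, 0 ≤ p n)
    (hpmono : Monotone p)
    (hrec : ∀ n, 2 ≤ n → T n ≤ 2 * (∑ i ∈ Finset.Icc 1 (n - 1), T i) + p n) :
    ∀ n, 1 ≤ n → T n ≤ 3 ^ (n - 1) * (T 1 + p n) := by
  have aux : ∀ m : ℕ, ∑ i ∈ Finset.Icc 1 (m + 1), T i ≤
      3 ^ m * T 1 + ((3 ^ m - 1) / 2) * p (m + 1) := by
    intro m
    induction m with
    | zero => simp
    | succ k ih =>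
      have hsum : ∑ i ∈ Finset.Icc 1 (k + 2), T i =
          (∑ i ∈ Finset.Icc 1 (k + 1), T i) + T (k + 2) :=
        Finset.sum_Icc_succ_top (by omega) T
      have hrec2 := hrec (k + 2) (by omega)
      norm_num at hrec2
      have hpm : p (k + 1) ≤ p (k + 2) := hpmono (by omega)
      have h3 : (1 : ℝ) ≤ 3 ^ k := one_le_pow₀ (by norm_num)
      have hT1 := hT 1
      rw [hsum, pow_succ]
      nlinarith [ih, hrec2, hpm, hp (k + 1), hp (k + 2)]
  intro n hn
  rcases Nat.lt_or_ge n 2 with h | h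
  · interval_cases n
    have := hp 1
    have h3 : (1 : ℝ) ≤ 3 ^ (0 : ℕ) := by norm_num
    simp
    nlinarith [hT 1]
  · obtain ⟨m, rfl⟩ : ∃ m, n = m + 2 := ⟨n - 2, by omega⟩
    have hrec2 := hrec (m + 2) (by omega)
    norm_num at hrec2
    have haux := aux m
    have hpm : p (m + 1) ≤ p (m + 2) := hpmono (by omega)
    have h3 : (1 : ℝ) ≤ 3 ^ m := one_le_pow₀ (by norm_num)
    have : (m + 2) - 1 = m + 1 := by omega
    rw [this, pow_succ]
    nlinarith [hT 1, hp (m + 2)]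
end

section
/- For every integer k ≥ 1, the equation x^{k+1} = 2·x^k + (5k − 1) has a unique real root c_k in the interval (2, ∞). Moreover, c_k converges to 2 as k → ∞; that is, for every ε > 0 there exists K such that c_k < 2 + ε for all k ≥ K. -/
open Filter

lemma key_eq (k : ℕ) (c : ℝ) :
    c ^ (k + 1) = 2 * c ^ k + (5 * (k : ℝ) - 1) ↔ c ^ k * (c - 2) = 5 * (k : ℝ) - 1 := by
  rw [pow_succ]; constructor <;> intro h <;> nlinarith [h]

lemma mono_aux (k : ℕ) {a b : ℝ} (ha : 2 ≤ a) (hab : a < b) :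
    a ^ k * (a - 2) < b ^ k * (b - 2) := by
  have h1 : a ^ k ≤ b ^ k := pow_le_pow_left₀ (by linarith) hab.le k
  have h2 : (0:ℝ) < b ^ k := pow_pos (by linarith) k
  nlinarith

theorem stmt_12 :
    (∀ k : ℕ, 1 ≤ k →
      ∃! c : ℝ, 2 < c ∧ c ^ (k + 1) = 2 * c ^ k + (5 * (k : ℝ) - 1)) ∧
    (∀ c : ℕ → ℝ,
      (∀ k : ℕ, 1 ≤ k →
        2 < c k ∧ (c k) ^ (k + 1) = 2 * (c k) ^ k + (5 * (k : ℝ) - 1)) →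
      ∀ ε : ℝ, 0 < ε → ∃ K : ℕ, ∀ k, K ≤ k → c k < 2 + ε) := by
  constructor
  · intro k hk
    have hk1 : (1:ℝ) ≤ (k:ℝ) := by exact_mod_cast hk
    set M : ℝ := 5 * (k:ℝ) + 1 with hM
    have hM2 : 2 ≤ M := by linarith
    -- existence via IVT
    have hcont : ContinuousOn (fun x : ℝ => x ^ k * (x - 2)) (Set.Icc 2 M) := by
      fun_prop
    have hiv := intermediate_value_Icc hM2 hcont
    have hmem : (5 * (k:ℝ) - 1) ∈ Set.Icc ((fun x : ℝ => x ^ k * (x - 2)) 2)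
        ((fun x : ℝ => x ^ k * (x - 2)) M) := by
      constructor
      · simp only; linarith
      · simp only
        have hMk : 1 ≤ M ^ k := one_le_pow₀ (by linarith)
        have : M - 2 = 5 * (k:ℝ) - 1 := by rw [hM]; ring
        rw [this]
        nlinarith
    obtain ⟨c, hcI, hceq⟩ := hiv hmem
    simp only at hceq
    have hc2 : 2 < c := by
      rcases lt_or_eq_of_le hcI.1 with h | h
      · exact h
      · exfalso; rw [← h] at hceq; simp at hceq; linarith
    refine ⟨c, ⟨hc2, (key_eq k c).mpr hceq⟩, ?_⟩
    rintro d ⟨hd2, hdeq⟩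
    rw [key_eq] at hdeq
    rcases lt_trichotomy d c with h | h | h
    · have := mono_aux k hd2.le h
      rw [hdeq, hceq] at this; linarith
    · exact h
    · have := mono_aux k hc2.le h
      rw [hdeq, hceq] at this; linarith
  · intro c hc ε hε
    have htend : Tendsto (fun n : ℕ => (n : ℝ) ^ 1 / 2 ^ n) atTop (nhds 0) :=
      tendsto_pow_const_div_const_pow_of_one_lt 1 (by norm_num)
    have hev : ∀ᶠ n : ℕ in atTop, (n : ℝ) ^ 1 / 2 ^ n < ε / 5 :=
      htend.eventually_lt_const (by linarith)
    obtain ⟨K, hK⟩ := eventually_atTop.mp hev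
    refine ⟨max K 1, fun k hk => ?_⟩
    have hk1 : 1 ≤ k := le_trans (le_max_right K 1) hk
    have hkK : K ≤ k := le_trans (le_max_left K 1) hk
    obtain ⟨hck2, hckeq⟩ := hc k hk1
    rw [key_eq] at hckeq
    by_contra hcon
    push_neg at hcon
    have h2k : (0:ℝ) < 2 ^ k := by positivity
    have h5 : 5 * (k : ℝ) < ε * 2 ^ k := by
      have := hK k hkK
      rw [pow_one, div_lt_iff₀ h2k] at this
      nlinarith
    have hpow : (2:ℝ) ^ k ≤ (c k) ^ k := pow_le_pow_left₀ (by norm_num) hck2.le k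
    have : ε * 2 ^ k ≤ (c k) ^ k * (c k - 2) := by nlinarith
    linarith
end
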